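/- Let P be a k×k permutation matrix and m, n coprime positive integers. Then there exist integer diagonal matrices D_1, D_2 with gcd(det D_1, m) = 1 and gcd(det D_2, n) = 1 such that det(n D_1 + m D_2 P) = 1. -/

import Mathlib

open Matrix Equiv Equiv.Perm Finset

/-- The matrix with `X` on the diagonal and `Y i` at position `(i, σ i)`. -/
def Amat {β : Type} [DecidableEq β] (σ : Equiv.Perm β) (X Y : β → ℤ) : Matrix β β ℤ :=
  Matrix.of fun i j => (if i = j then X i else 0) + (if σ i = j then Y i else 0)

private lemma fin_add_one_eq {n : ℕ} {a b : Fin (n + 1)} (h : a + 1 = b) :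
    ((a : ℕ) = n ∧ (b : ℕ) = 0) ∨ (a : ℕ) + 1 = (b : ℕ) := by
  have := congrArg Fin.val h
  rw [Fin.val_add_one] at this
  split_ifs at this with hl
  · exact Or.inl ⟨by rw [hl]; rfl, this.symm⟩
  · exact Or.inr this

theorem Amat_rot (ℓ : ℕ) (X Y : Fin (ℓ + 1) → ℤ) :
    (Amat (finRotate (ℓ + 1)) X Y).det = (∏ i, X i) + (-1) ^ ℓ * ∏ i, Y i := by
  rcases Nat.eq_zero_or_pos ℓ with rfl | hpos
  · simp [Amat, Matrix.det_fin_one]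
  have hlast : ∀ i : Fin (ℓ + 1), (finRotate (ℓ + 1) i = 0) ↔ i = Fin.last ℓ := by
    intro i
    rw [finRotate_succ_apply]
    constructor
    · intro h
      rcases fin_add_one_eq h with ⟨h1, _⟩ | h2
      · exact Fin.ext (by rw [h1]; rfl)
      · exact absurd h2 (by simp)
    · intro h; subst h; simp [Fin.last_add_one]
  have h0last : (0 : Fin (ℓ + 1)) ≠ Fin.last ℓ := by
    intro h; have := congrArg Fin.val h
    rw [Fin.val_zero, Fin.val_last] at this; omega
  rw [Matrix.det_succ_column_zero,
    Finset.sum_eq_add_of_mem 0 (Fin.last ℓ) (mem_univ _) (mem_univ _) h0last ?_]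
  · -- two terms
    have hm0 : ((Amat (finRotate (ℓ + 1)) X Y).submatrix (Fin.succAbove 0) Fin.succ).det
        = ∏ i : Fin ℓ, X i.succ := by
      rw [Fin.succAbove_zero, Matrix.det_of_upperTriangular]
      · refine Finset.prod_congr rfl fun i _ => ?_
        simp only [Matrix.submatrix_apply, Amat, Matrix.of_apply, finRotate_succ_apply]
        have h2 : i.succ + 1 ≠ i.succ := by
          intro h
          rcases fin_add_one_eq h with ⟨ha, hb⟩ | hc
          · simp only [Fin.val_succ] at ha hb; omega
          · simp only [Fin.val_succ] at hc; omega
        simp [h2]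
      · intro i j hij
        have hij' : (j : ℕ) < (i : ℕ) := hij
        simp only [Matrix.submatrix_apply, Amat, Matrix.of_apply, finRotate_succ_apply]
        have h1 : i.succ ≠ j.succ := by
          intro h; have := congrArg Fin.val h
          simp only [Fin.val_succ] at this; omega
        have h2 : i.succ + 1 ≠ j.succ := by
          intro h
          rcases fin_add_one_eq h with ⟨ha, hb⟩ | hc
          · simp only [Fin.val_succ] at hb; omega
          · simp only [Fin.val_succ] at hc; omega
        rw [if_neg h1, if_neg h2, add_zero]
    have hmlast : ((Amat (finRotate (ℓ + 1)) X Y).submatrix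
        (Fin.succAbove (Fin.last ℓ)) Fin.succ).det = ∏ i : Fin ℓ, Y i.castSucc := by
      rw [Fin.succAbove_last, Matrix.det_of_lowerTriangular]
      · refine Finset.prod_congr rfl fun i _ => ?_
        simp only [Matrix.submatrix_apply, Amat, Matrix.of_apply, finRotate_succ_apply]
        have h1 : i.castSucc ≠ i.succ := by
          intro h; have := congrArg Fin.val h
          simp only [Fin.coe_castSucc, Fin.val_succ] at this; omega
        have h2 : i.castSucc + 1 = i.succ := by
          have hc : i.castSucc ≠ Fin.last ℓ := by
            intro h; have := congrArg Fin.val h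
            have h3 := i.isLt
            simp only [Fin.coe_castSucc, Fin.val_last] at this; omega
          apply Fin.ext
          rw [Fin.val_add_one, if_neg hc, Fin.coe_castSucc, Fin.val_succ]
        rw [if_neg h1, if_pos h2, zero_add]
      · intro i j hij
        simp only [OrderDual.toDual_lt_toDual] at hij
        have hij' : (i : ℕ) < (j : ℕ) := hij
        simp only [Matrix.submatrix_apply, Amat, Matrix.of_apply, finRotate_succ_apply]
        have h1 : i.castSucc ≠ j.succ := by
          intro h; have := congrArg Fin.val h
          simp only [Fin.coe_castSucc, Fin.val_succ] at this; omega
        have h2 : i.castSucc + 1 ≠ j.succ := by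
          intro h
          rcases fin_add_one_eq h with ⟨ha, hb⟩ | hc
          · simp only [Fin.val_succ] at hb; omega
          · simp only [Fin.coe_castSucc, Fin.val_succ] at hc; omega
        rw [if_neg h1, if_neg h2, add_zero]
    have e0 : (Amat (finRotate (ℓ + 1)) X Y) 0 0 = X 0 := by
      have h2 : finRotate (ℓ + 1) 0 ≠ 0 := by
        intro h; exact h0last.symm ((hlast 0).mp h).symm
      simp only [Amat, Matrix.of_apply]
      rw [if_neg h2]
      simp
    have elast : (Amat (finRotate (ℓ + 1)) X Y) (Fin.last ℓ) 0 = Y (Fin.last ℓ) := by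
      have h1 : Fin.last ℓ ≠ 0 := Ne.symm h0last
      have h2 : finRotate (ℓ + 1) (Fin.last ℓ) = 0 := (hlast _).mpr rfl
      simp only [Amat, Matrix.of_apply]
      rw [if_neg h1, if_pos h2, zero_add]
    rw [e0, elast, hm0, hmlast, Fin.val_zero, Fin.val_last, pow_zero,
      Fin.prod_univ_succ X, Fin.prod_univ_castSucc Y]
    ring
  · intro i _ hi
    have h1 : i ≠ 0 := hi.1
    have h2 : finRotate (ℓ + 1) i ≠ 0 := fun h => hi.2 ((hlast i).mp h)
    simp only [Amat, Matrix.of_apply]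
    rw [if_neg h1, if_neg h2, add_zero, mul_zero, zero_mul]

/-- `permCongr` as a `MulEquiv`. -/
def permCongrMul {β γ : Type} (e : β ≃ γ) : Equiv.Perm β ≃* Equiv.Perm γ :=
  { e.permCongr with
    map_mul' := by
      intro σ τ
      ext x
      simp [Equiv.permCongr_apply] }

lemma permCongrMul_apply {β γ : Type} (e : β ≃ γ) (σ : Equiv.Perm β) :
    permCongrMul e σ = e.permCongr σ := rfl

lemma permCongr_zpow {β γ : Type} (e : β ≃ γ) (σ : Equiv.Perm β) (i : ℤ) :
    e.permCongr (σ ^ i) = (e.permCongr σ) ^ i := by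
  rw [← permCongrMul_apply, ← permCongrMul_apply, map_zpow]

lemma sameCycle_permCongr {β γ : Type} (e : β ≃ γ) (σ : Equiv.Perm β) (x y : γ) :
    Equiv.Perm.SameCycle (e.permCongr σ) x y ↔ Equiv.Perm.SameCycle σ (e.symm x) (e.symm y) := by
  constructor
  · rintro ⟨i, hi⟩
    exact ⟨i, by rw [← permCongr_zpow] at hi; simpa [Equiv.permCongr_apply] using congrArg e.symm hi⟩
  · rintro ⟨i, hi⟩
    refine ⟨i, ?_⟩
    rw [← permCongr_zpow]
    simp [Equiv.permCongr_apply, hi]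

lemma Amat_transport {β γ : Type} [Fintype β] [Fintype γ] [DecidableEq β] [DecidableEq γ]
    (e : β ≃ γ) (σ : Equiv.Perm β) (X Y : β → ℤ) :
    (Amat σ X Y).det = (Amat (e.permCongr σ) (X ∘ e.symm) (Y ∘ e.symm)).det := by
  rw [← Matrix.det_submatrix_equiv_self e (Amat (e.permCongr σ) (X ∘ e.symm) (Y ∘ e.symm))]
  congr 1
  ext i j
  simp only [Matrix.submatrix_apply, Amat, Matrix.of_apply, Equiv.permCongr_apply,
    Function.comp_apply, Equiv.symm_apply_apply]
  congr 1
  · congr 1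
    simp [Equiv.apply_eq_iff_eq]
  · congr 1
    simp [eq_comm, Equiv.symm_apply_eq]

lemma Amat_cycle {β : Type} [Fintype β] [DecidableEq β] [Nonempty β] (σ : Equiv.Perm β)
    (htrans : ∀ x y : β, σ.SameCycle x y) (X Y : β → ℤ) :
    (Amat σ X Y).det = (∏ i, X i) + (-1) ^ (Fintype.card β + 1) * ∏ i, Y i := by
  obtain ⟨ℓ, hℓ⟩ : ∃ ℓ, Fintype.card β = ℓ + 1 :=
    ⟨Fintype.card β - 1, by have := Fintype.card_pos (α := β); omega⟩
  -- find `e` conjugating `σ` to `finRotate`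
  obtain ⟨e, he⟩ : ∃ e : β ≃ Fin (ℓ + 1), e.permCongr σ = finRotate (ℓ + 1) := by
    have e₀ : β ≃ Fin (ℓ + 1) := Fintype.equivFinOfCardEq hℓ
    set τ := e₀.permCongr σ with hτ
    have hτtrans : ∀ x y : Fin (ℓ + 1), τ.SameCycle x y := by
      intro x y; rw [sameCycle_permCongr]; exact htrans _ _
    rcases Nat.eq_zero_or_pos ℓ with rfl | hpos
    · refine ⟨e₀, ?_⟩
      ext x
      have h1 := ((e₀.permCongr σ) x).isLt
      have h2 := ((finRotate 1) x).isLt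
      omega
    · obtain ⟨ℓ', rfl⟩ : ∃ ℓ', ℓ = ℓ' + 1 := ⟨ℓ - 1, by omega⟩
      -- τ is a cycle with full support
      have hmove : ∀ x : Fin (ℓ' + 2), τ x ≠ x := by
        intro x hx
        have h2 : ∀ y, τ.SameCycle x y → y = x := by
          rintro y ⟨i, hi⟩
          rw [← hi]
          exact Equiv.Perm.zpow_apply_eq_self_of_apply_eq_self hx i
        have e0 : (0 : Fin (ℓ' + 2)) = x := h2 0 (hτtrans x 0)
        have e1 : (1 : Fin (ℓ' + 2)) = x := h2 1 (hτtrans x 1)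
        have h01 : (0 : Fin (ℓ' + 2)) ≠ 1 := by
          intro h; have := congrArg Fin.val h; simp at this
        exact h01 (e0.trans e1.symm)
      have hcyc : τ.IsCycle := ⟨0, hmove 0, fun y _ => hτtrans 0 y⟩
      have hsupp : τ.support = Finset.univ :=
        Finset.eq_univ_iff_forall.mpr fun x => Equiv.Perm.mem_support.mpr (hmove x)
      have hconj : IsConj (finRotate (ℓ' + 2)) τ :=
        (isCycle_finRotate).isConj hcyc (by rw [support_finRotate, hsupp])
      obtain ⟨g, hg⟩ := isConj_iff.mp hconj
      refine ⟨e₀.trans (g⁻¹ : Equiv.Perm (Fin (ℓ' + 2))), ?_⟩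
      have hcomp : (e₀.trans (g⁻¹ : Equiv.Perm (Fin (ℓ' + 2)))).permCongr σ
          = (g⁻¹ : Equiv.Perm (Fin (ℓ' + 2))).permCongr τ := by
        ext x
        simp [Equiv.permCongr_apply, hτ, Equiv.Perm.inv_def]
      rw [hcomp, Equiv.permCongr_eq_mul, ← hg]
      group
  rw [Amat_transport e σ X Y, he, Amat_rot, hℓ]
  have hX : ∏ i : Fin (ℓ + 1), (X ∘ e.symm) i = ∏ i : β, X i := e.symm.prod_comp X
  have hY : ∏ i : Fin (ℓ + 1), (Y ∘ e.symm) i = ∏ i : β, Y i := e.symm.prod_comp Y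
  rw [hX, hY]
  have : ((-1 : ℤ)) ^ (ℓ + 1 + 1) = (-1) ^ ℓ := by rw [pow_succ, pow_succ]; ring
  rw [this]

lemma Amat_block {β : Type} [Fintype β] [DecidableEq β] (σ : Equiv.Perm β)
    (p : β → Prop) [DecidablePred p] (hp : ∀ x, p (σ x) ↔ p x) (X Y : β → ℤ) :
    (Amat σ X Y).det =
      (Amat (σ.subtypePerm hp) (fun x => X x.1) (fun x => Y x.1)).det *
      (Amat (σ.subtypePerm (fun x => not_congr (hp x)) : Equiv.Perm {x // ¬ p x})
        (fun x => X x.1) (fun x => Y x.1)).det := by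
  rw [← Matrix.det_fromBlocks_zero₁₂ (Amat (σ.subtypePerm hp) (fun x => X x.1) (fun x => Y x.1))
      0 (Amat (σ.subtypePerm (fun x => not_congr (hp x))) (fun x => X x.1) (fun x => Y x.1))]
  rw [← Matrix.det_submatrix_equiv_self (Equiv.sumCompl p) (Amat σ X Y)]
  congr 1
  ext i j
  rcases i with i | i <;> rcases j with j | j <;>
    simp only [Matrix.submatrix_apply, Equiv.sumCompl_apply_inl, Equiv.sumCompl_apply_inr,
      Matrix.fromBlocks_apply₁₁, Matrix.fromBlocks_apply₁₂, Matrix.fromBlocks_apply₂₁,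
      Matrix.fromBlocks_apply₂₂, Amat, Matrix.of_apply, Equiv.Perm.subtypePerm_apply,
      Matrix.zero_apply]
  · congr 1 <;> congr 1 <;> simp [Subtype.ext_iff]
  · have h1 : (i : β) ≠ (j : β) := fun h => j.2 (h ▸ i.2)
    have h2 : σ (i : β) ≠ (j : β) := fun h => j.2 (h ▸ (hp _).mpr i.2)
    rw [if_neg h1, if_neg h2, add_zero]
  · have h1 : (i : β) ≠ (j : β) := fun h => i.2 (h ▸ j.2)
    have h2 : σ (i : β) ≠ (j : β) := fun h => i.2 ((hp _).mp (h ▸ j.2))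
    rw [if_neg h1, if_neg h2, add_zero]
  · congr 1 <;> congr 1 <;> simp [Subtype.ext_iff]

lemma Amat_main (mz nz : ℤ) (hmn : IsCoprime mz nz) :
    ∀ (N : ℕ) (β : Type) [Fintype β] [DecidableEq β], Fintype.card β ≤ N →
    ∀ σ : Equiv.Perm β, ∃ d₁ d₂ : β → ℤ,
      IsCoprime (∏ i, d₁ i) mz ∧ IsCoprime (∏ i, d₂ i) nz ∧
      (Amat σ (fun i => nz * d₁ i) (fun i => mz * d₂ i)).det = 1 := by
  intro N
  induction N with
  | zero =>
    intro β _ _ hcard σ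
    haveI : IsEmpty β := Fintype.card_eq_zero_iff.mp (Nat.le_zero.mp hcard)
    exact ⟨1, 1, by simpa using isCoprime_one_left, by simpa using isCoprime_one_left,
      Matrix.det_isEmpty⟩
  | succ N ih =>
    intro β _ _ hcard σ
    classical
    rcases isEmpty_or_nonempty β with hemp | hne
    · exact ⟨1, 1, by simpa using isCoprime_one_left, by simpa using isCoprime_one_left,
        Matrix.det_isEmpty⟩
    obtain ⟨a⟩ := hne
    set p : β → Prop := fun x => σ.SameCycle a x with hpdef
    have hp : ∀ x, p (σ x) ↔ p x := fun x => Equiv.Perm.sameCycle_apply_right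
    have hpa : p a := Equiv.Perm.SameCycle.refl _ _
    -- the complement has fewer elements
    have hcard' : Fintype.card {x // ¬ p x} ≤ N := by
      have h2 : Fintype.card {x // ¬ p x} < Fintype.card β :=
        Fintype.card_subtype_lt (p := fun x => ¬ p x) (x := a) (by simpa using hpa)
      omega
    obtain ⟨d₁', d₂', hc₁', hc₂', hdet'⟩ :=
      ih {x // ¬ p x} hcard' (σ.subtypePerm (fun x => not_congr (hp x)))
    -- Bezout data for the cycle block
    obtain ⟨ℓ', hℓ'⟩ : ∃ ℓ', Fintype.card {x // p x} = ℓ' + 1 := by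
      have : 0 < Fintype.card {x // p x} := Fintype.card_pos_iff.mpr ⟨⟨a, hpa⟩⟩
      exact ⟨Fintype.card {x // p x} - 1, by omega⟩
    obtain ⟨u, v, huv⟩ : ∃ u v : ℤ, u * nz ^ (ℓ' + 1) + v * mz ^ (ℓ' + 1) = 1 := by
      obtain ⟨u, v, huv⟩ := (hmn.symm.pow (m := ℓ' + 1) (n := ℓ' + 1))
      exact ⟨u, v, huv⟩
    set ε : ℤ := (-1) ^ (ℓ' + 1 + 1) with hεdef
    have hεε : ε * ε = 1 := by
      rw [hεdef, ← pow_add]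
      exact Even.neg_one_pow ⟨ℓ' + 2, by ring⟩
    set d₁ : β → ℤ := fun x => if h : p x then (if x = a then u else 1) else d₁' ⟨x, h⟩ with hd₁
    set d₂ : β → ℤ := fun x => if h : p x then (if x = a then ε * v else 1) else d₂' ⟨x, h⟩
      with hd₂
    have hs₁ : ∀ x : {x // p x}, d₁ x.1 = if x = ⟨a, hpa⟩ then u else 1 := by
      rintro ⟨x, hx⟩
      simp only [hd₁, dif_pos hx]
      congr 1
      simp [Subtype.ext_iff]
    have hs₂ : ∀ x : {x // p x}, d₂ x.1 = if x = ⟨a, hpa⟩ then ε * v else 1 := by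
      rintro ⟨x, hx⟩
      simp only [hd₂, dif_pos hx]
      congr 1
      simp [Subtype.ext_iff]
    have hc₁ : ∀ x : {x // ¬ p x}, d₁ x.1 = d₁' x := by
      rintro ⟨x, hx⟩; simp [hd₁, dif_neg hx]
    have hc₂ : ∀ x : {x // ¬ p x}, d₂ x.1 = d₂' x := by
      rintro ⟨x, hx⟩; simp [hd₂, dif_neg hx]
    have hps₁ : ∏ x : {x // p x}, d₁ x.1 = u := by
      rw [Finset.prod_congr rfl fun x _ => hs₁ x]
      rw [Finset.prod_eq_single_of_mem ⟨a, hpa⟩ (Finset.mem_univ _)]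
      · simp
      · intro b _ hb; rw [if_neg hb]
    have hps₂ : ∏ x : {x // p x}, d₂ x.1 = ε * v := by
      rw [Finset.prod_congr rfl fun x _ => hs₂ x]
      rw [Finset.prod_eq_single_of_mem ⟨a, hpa⟩ (Finset.mem_univ _)]
      · simp
      · intro b _ hb; rw [if_neg hb]
    have hcopu : IsCoprime u mz := ⟨nz ^ (ℓ' + 1), v * mz ^ ℓ', by linear_combination huv⟩
    have hcopv : IsCoprime (ε * v) nz :=
      ⟨ε * mz ^ (ℓ' + 1), u * nz ^ ℓ', by linear_combination (v * mz ^ (ℓ' + 1)) * hεε + huv⟩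
    refine ⟨d₁, d₂, ?_, ?_, ?_⟩
    · rw [← Fintype.prod_subtype_mul_prod_subtype p d₁, hps₁,
        Finset.prod_congr rfl fun x _ => hc₁ x]
      exact hcopu.mul_left hc₁'
    · rw [← Fintype.prod_subtype_mul_prod_subtype p d₂, hps₂,
        Finset.prod_congr rfl fun x _ => hc₂ x]
      exact hcopv.mul_left hc₂'
    · rw [Amat_block σ p hp]
      have htrans : ∀ x y : {x // p x}, (σ.subtypePerm hp).SameCycle x y := by
        rintro x y
        obtain ⟨i, hi⟩ := (x.2.symm.trans y.2 : σ.SameCycle x.1 y.1)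
        refine ⟨i, ?_⟩
        rw [Equiv.Perm.subtypePerm_zpow]
        exact Subtype.ext hi
      haveI : Nonempty {x // p x} := ⟨⟨a, hpa⟩⟩
      have hcycdet := Amat_cycle (σ.subtypePerm hp) htrans
        (fun x => nz * d₁ x.1) (fun x => mz * d₂ x.1)
      have hXprod : ∏ x : {x // p x}, (nz * d₁ x.1) = nz ^ (ℓ' + 1) * u := by
        rw [Finset.prod_mul_distrib, Finset.prod_const, Finset.card_univ, hℓ', hps₁]
      have hYprod : ∏ x : {x // p x}, (mz * d₂ x.1) = mz ^ (ℓ' + 1) * (ε * v) := by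
        rw [Finset.prod_mul_distrib, Finset.prod_const, Finset.card_univ, hℓ', hps₂]
      have hB₁ : (Amat (σ.subtypePerm hp) (fun x => nz * d₁ x.1)
          (fun x => mz * d₂ x.1)).det = 1 := by
        rw [hcycdet, hXprod, hYprod, hℓ', ← hεdef]
        linear_combination (mz ^ (ℓ' + 1) * v) * hεε + huv
      have hB₂ : (Amat (σ.subtypePerm (fun x => not_congr (hp x)) : Equiv.Perm {x // ¬ p x})
          (fun x => nz * d₁ x.1) (fun x => mz * d₂ x.1)).det = 1 := by
        have e1 : (fun x : {x // ¬ p x} => nz * d₁ x.1) = fun x => nz * d₁' x := by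
          funext x; rw [hc₁ x]
        have e2 : (fun x : {x // ¬ p x} => mz * d₂ x.1) = fun x => mz * d₂' x := by
          funext x; rw [hc₂ x]
        rw [e1, e2]
        exact hdet'
      rw [hB₁, hB₂, mul_one]


/-- For any permutation matrix `P` (of `σ ∈ S_k`) and coprime `m`, `n`, there are
integer diagonal matrices `D₁`, `D₂` with `gcd(det D₁, m) = 1`, `gcd(det D₂, n) = 1`
and `det(n·D₁ + m·D₂·P) = 1`. -/
theorem exists_diagonal_det_one (k m n : ℕ) (hm : 0 < m) (hn : 0 < n)
    (hmn : Nat.Coprime m n) (σ : Equiv.Perm (Fin k)) :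
    ∃ d₁ d₂ : Fin k → ℤ,
      IsCoprime (Matrix.diagonal d₁).det (m : ℤ) ∧
      IsCoprime (Matrix.diagonal d₂).det (n : ℤ) ∧
      ((n : ℤ) • Matrix.diagonal d₁ +
        (m : ℤ) • (Matrix.diagonal d₂ * σ.permMatrix ℤ)).det = 1 := by
  have hcop : IsCoprime (m : ℤ) (n : ℤ) := Nat.isCoprime_iff_coprime.mpr hmn
  obtain ⟨d₁, d₂, h1, h2, h3⟩ :=
    Amat_main (m : ℤ) (n : ℤ) hcop k (Fin k) (le_of_eq (Fintype.card_fin k)) σ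
  refine ⟨d₁, d₂, by rwa [Matrix.det_diagonal], by rwa [Matrix.det_diagonal], ?_⟩
  have hmat : (n : ℤ) • Matrix.diagonal d₁ +
      (m : ℤ) • (Matrix.diagonal d₂ * σ.permMatrix ℤ) =
      Amat σ (fun i => (n : ℤ) * d₁ i) (fun i => (m : ℤ) * d₂ i) := by
    ext i j
    simp only [Matrix.add_apply, Matrix.smul_apply, Matrix.diagonal_apply, smul_eq_mul,
      Matrix.diagonal_mul, Amat, Matrix.of_apply, Equiv.Perm.permMatrix,
      PEquiv.toMatrix_apply, Equiv.toPEquiv_apply, Option.mem_def, Option.some.injEq]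
    by_cases h : i = j <;> by_cases h' : σ i = j <;>
      simp [h, h', eq_comm, mul_comm]
  rw [hmat]
  exact h3
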